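/- A pair (W, M) ∈ D is an equilibrium point of the synaptic ODE (i.e., M⁻¹WA = W and M⁻¹WAWᵀM⁻¹ = M) if and only if there exist a k×k real orthogonal matrix U, an n×k real matrix V whose columns are orthonormal eigenvectors of A, and a k×k diagonal matrix S whose i-th diagonal entry is the eigenvalue of A corresponding to the i-th column of V, such that W = U S Vᵀ and M = U S Uᵀ. -/

import Mathlib

open Matrix
open scoped Matrix

/-- An equilibrium point of the synaptic ODE: a pair `(W, M)` with `M` symmetric positive
definite satisfying `M⁻¹WA = W` and `M⁻¹WAWᵀM⁻¹ = M`. -/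
def IsEquilibrium {k n : ℕ} (A : Matrix (Fin n) (Fin n) ℝ)
    (W : Matrix (Fin k) (Fin n) ℝ) (M : Matrix (Fin k) (Fin k) ℝ) : Prop :=
  M.PosDef ∧ M⁻¹ * W * A = W ∧ M⁻¹ * W * A * Wᵀ * M⁻¹ = M

/-- Cancellation helper: if `P * Q = 1` then `P * (Q * X) = X`. -/
theorem cancel_helper {a b m : ℕ} {P : Matrix (Fin a) (Fin b) ℝ}
    {Q : Matrix (Fin b) (Fin a) ℝ} (h : P * Q = 1)
    (X : Matrix (Fin a) (Fin m) ℝ) : P * (Q * X) = X := by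
  rw [← Matrix.mul_assoc, h, Matrix.one_mul]

/-- Push helper: if `P * Q = R * S` then `P * (Q * X) = R * (S * X)`. -/
theorem push_helper {a b c d m : ℕ} {P : Matrix (Fin a) (Fin b) ℝ}
    {Q : Matrix (Fin b) (Fin c) ℝ} {R : Matrix (Fin a) (Fin d) ℝ}
    {S : Matrix (Fin d) (Fin c) ℝ} (h : P * Q = R * S)
    (X : Matrix (Fin c) (Fin m) ℝ) : P * (Q * X) = R * (S * X) := by
  rw [← Matrix.mul_assoc, h, Matrix.mul_assoc]

/-- Characterization of equilibrium points: `(W, M) ∈ D` is an equilibrium point iff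
`W = U S Vᵀ` and `M = U S Uᵀ` where `U` is `k×k` orthogonal, the columns of the `n×k`
matrix `V` are orthonormal eigenvectors of `A` (encoded by `Vᵀ V = I` and
`A V = V diagonal s`), and `S = diagonal s` holds the corresponding eigenvalues. -/
theorem isEquilibrium_iff_svd {k n : ℕ} (hk : 0 < k) (hkn : k < n)
    (A : Matrix (Fin n) (Fin n) ℝ) (hA : A.PosDef)
    (W : Matrix (Fin k) (Fin n) ℝ) (M : Matrix (Fin k) (Fin k) ℝ) :
    IsEquilibrium A W M ↔
      ∃ (U : Matrix (Fin k) (Fin k) ℝ) (s : Fin k → ℝ) (V : Matrix (Fin n) (Fin k) ℝ),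
        Uᵀ * U = 1 ∧ U * Uᵀ = 1 ∧
        Vᵀ * V = 1 ∧
        A * V = V * Matrix.diagonal s ∧
        W = U * Matrix.diagonal s * Vᵀ ∧
        M = U * Matrix.diagonal s * Uᵀ := by
  have hAt : Aᵀ = A := by
    have := hA.1
    rwa [Matrix.IsHermitian, Matrix.conjTranspose_eq_transpose_of_trivial] at this
  constructor
  · rintro ⟨hM, h1, h2⟩
    have hMt : Mᵀ = M := by
      have := hM.1
      rwa [Matrix.IsHermitian, Matrix.conjTranspose_eq_transpose_of_trivial] at this
    have hMdet : IsUnit M.det := isUnit_iff_ne_zero.mpr (ne_of_gt hM.det_pos)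
    have hMinv : M * M⁻¹ = 1 := Matrix.mul_nonsing_inv M hMdet
    have hinvM : M⁻¹ * M = 1 := Matrix.nonsing_inv_mul M hMdet
    -- derive W A = M W
    have hWA : W * A = M * W := by
      have h : M * (M⁻¹ * W * A) = M * W := by rw [h1]
      rwa [← Matrix.mul_assoc, ← Matrix.mul_assoc, hMinv, Matrix.one_mul] at h
    -- derive W Wᵀ = M M
    rw [h1] at h2
    have hWW : W * Wᵀ = M * M := by
      have h : W * Wᵀ * M⁻¹ * M = M * M := by rw [h2]
      rwa [Matrix.mul_assoc (W * Wᵀ), hinvM, Matrix.mul_one] at h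
    -- spectral decomposition of M
    have hMH : M.IsHermitian := hM.1
    set U : Matrix (Fin k) (Fin k) ℝ := (hMH.eigenvectorUnitary : Matrix (Fin k) (Fin k) ℝ)
      with hUdef
    set s : Fin k → ℝ := hMH.eigenvalues with hsdef
    have hspec : M = U * Matrix.diagonal s * Uᵀ := by
      have h := hMH.spectral_theorem
      simpa only [Matrix.star_eq_conjTranspose, Matrix.conjTranspose_eq_transpose_of_trivial,
        RCLike.ofReal_real_eq_id, Function.id_comp, Unitary.conjStarAlgAut_apply, Unitary.coe_star] using h
    have hUUt : U * Uᵀ = 1 := by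
      have h := (Matrix.mem_unitaryGroup_iff).mp hMH.eigenvectorUnitary.2
      simpa only [Matrix.star_eq_conjTranspose,
        Matrix.conjTranspose_eq_transpose_of_trivial] using h
    have hUtU : Uᵀ * U = 1 := by
      have h := (Matrix.mem_unitaryGroup_iff').mp hMH.eigenvectorUnitary.2
      simpa only [Matrix.star_eq_conjTranspose,
        Matrix.conjTranspose_eq_transpose_of_trivial] using h
    have hs : ∀ i, 0 < s i := fun i => hM.eigenvalues_pos i
    set s' : Fin k → ℝ := fun i => (s i)⁻¹ with hs'def
    have hDD' : Matrix.diagonal s * Matrix.diagonal s' = 1 := by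
      have h : (fun i => s i * s' i) = fun _ => (1 : ℝ) :=
        funext fun i => mul_inv_cancel₀ (hs i).ne'
      rw [Matrix.diagonal_mul_diagonal, h, Matrix.diagonal_one]
    have hD'D : Matrix.diagonal s' * Matrix.diagonal s = 1 := by
      have h : (fun i => s' i * s i) = fun _ => (1 : ℝ) :=
        funext fun i => inv_mul_cancel₀ (hs i).ne'
      rw [Matrix.diagonal_mul_diagonal, h, Matrix.diagonal_one]
    -- M U = U D
    have hMU : M * U = U * Matrix.diagonal s := by
      rw [hspec, Matrix.mul_assoc, Matrix.mul_assoc, hUtU, Matrix.mul_one]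
    have hAWt : A * Wᵀ = Wᵀ * M := by
      have h := congrArg Matrix.transpose hWA
      simpa only [Matrix.transpose_mul, hAt, hMt] using h
    refine ⟨U, s, Wᵀ * U * Matrix.diagonal s', hUtU, hUUt, ?_, ?_, ?_, hspec⟩
    · -- Vᵀ V = 1
      simp only [Matrix.transpose_mul, Matrix.diagonal_transpose, Matrix.transpose_transpose,
        Matrix.mul_assoc]
      rw [push_helper hWW, push_helper hMU, hDD', Matrix.mul_one, hMU,
        cancel_helper hUtU, hD'D]
    · -- A V = V D
      simp only [Matrix.mul_assoc]
      rw [push_helper hAWt, push_helper hMU, hDD', hD'D]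
    · -- W = U D Vᵀ
      simp only [Matrix.transpose_mul, Matrix.diagonal_transpose, Matrix.transpose_transpose,
        Matrix.mul_assoc]
      rw [cancel_helper hDD', cancel_helper hUUt]
  · rintro ⟨U, s, V, hUtU, hUUt, hVtV, hAV, hW, hM⟩
    -- the diagonal entries are positive
    have hVAV : Vᵀ * (A * V) = Matrix.diagonal s := by
      rw [hAV, ← Matrix.mul_assoc, hVtV, Matrix.one_mul]
    have hs : ∀ i, 0 < s i := by
      intro i
      have hcol : (fun j => V j i) ≠ 0 := by
        intro h
        have h1 : (Vᵀ * V) i i = (1 : Matrix (Fin k) (Fin k) ℝ) i i := by rw [hVtV]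
        rw [Matrix.one_apply_eq] at h1
        simp only [Matrix.mul_apply, Matrix.transpose_apply] at h1
        have hz : ∀ j, V j i = 0 := fun j => congrFun h j
        simp [hz] at h1
      have hpos := hA.dotProduct_mulVec_pos hcol
      have hdot : star (fun j => V j i) ⬝ᵥ (A *ᵥ fun j => V j i) = s i := by
        have h2 : (Vᵀ * (A * V)) i i = s i := by rw [hVAV, Matrix.diagonal_apply_eq]
        rw [← h2]
        simp [Matrix.mul_apply, Matrix.mulVec, dotProduct]
      rw [hdot] at hpos
      exact hpos
    set s' : Fin k → ℝ := fun i => (s i)⁻¹ with hs'def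
    have hDD' : Matrix.diagonal s * Matrix.diagonal s' = 1 := by
      have h : (fun i => s i * s' i) = fun _ => (1 : ℝ) :=
        funext fun i => mul_inv_cancel₀ (hs i).ne'
      rw [Matrix.diagonal_mul_diagonal, h, Matrix.diagonal_one]
    have hD'D : Matrix.diagonal s' * Matrix.diagonal s = 1 := by
      have h : (fun i => s' i * s i) = fun _ => (1 : ℝ) :=
        funext fun i => inv_mul_cancel₀ (hs i).ne'
      rw [Matrix.diagonal_mul_diagonal, h, Matrix.diagonal_one]
    -- M is positive definite
    have hMpd : M.PosDef := by
      refine Matrix.PosDef.of_dotProduct_mulVec_pos ?_ ?_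
      · rw [hM, Matrix.IsHermitian, Matrix.conjTranspose_eq_transpose_of_trivial]
        simp [Matrix.transpose_mul, Matrix.diagonal_transpose, Matrix.mul_assoc]
      · intro x hx
        have hy : Uᵀ *ᵥ x ≠ 0 := by
          intro h
          apply hx
          have hxx : U *ᵥ (Uᵀ *ᵥ x) = x := by
            rw [Matrix.mulVec_mulVec, hUUt, Matrix.one_mulVec]
          rw [h, Matrix.mulVec_zero] at hxx
          exact hxx.symm
        have hD : (Matrix.diagonal s).PosDef := Matrix.PosDef.diagonal hs
        have hpos := hD.dotProduct_mulVec_pos hy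
        have heq : star x ⬝ᵥ (M *ᵥ x)
            = star (Uᵀ *ᵥ x) ⬝ᵥ (Matrix.diagonal s *ᵥ (Uᵀ *ᵥ x)) := by
          rw [hM]
          rw [← Matrix.mulVec_mulVec, ← Matrix.mulVec_mulVec]
          simp only [star_trivial]
          rw [Matrix.dotProduct_mulVec x U, ← Matrix.mulVec_transpose]
        rw [heq]
        exact hpos
    -- M⁻¹ = U D⁻¹ Uᵀ
    have hMinv : M⁻¹ = U * Matrix.diagonal s' * Uᵀ := by
      apply Matrix.inv_eq_right_inv
      rw [hM]
      simp only [Matrix.mul_assoc]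
      rw [cancel_helper hUtU, cancel_helper hDD', hUUt]
    -- Vᵀ A = D Vᵀ
    have hVtA : Vᵀ * A = Matrix.diagonal s * Vᵀ := by
      have h := congrArg Matrix.transpose hAV
      simpa only [Matrix.transpose_mul, hAt, Matrix.diagonal_transpose] using h
    have hWA2 : W * A = U * (Matrix.diagonal s * (Matrix.diagonal s * Vᵀ)) := by
      rw [hW]
      simp only [Matrix.mul_assoc]
      rw [hVtA]
    have key1 : M⁻¹ * W * A = W := by
      rw [Matrix.mul_assoc, hWA2, hMinv, hW]
      simp only [Matrix.mul_assoc]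
      rw [cancel_helper hUtU, cancel_helper hD'D]
    refine ⟨hMpd, key1, ?_⟩
    rw [key1, hMinv, hW, hM]
    simp only [Matrix.transpose_mul, Matrix.diagonal_transpose, Matrix.transpose_transpose,
      Matrix.mul_assoc]
    rw [cancel_helper hVtV, cancel_helper hUtU, cancel_helper hDD']
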